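/- Throughout the mixed rectification of a semistandard shifted tableau T (which by definition has no low entries in diagonal cells), no intermediate configuration ever has a low entry in a diagonal cell. -/
import Mathlib


/-- An entry of a configuration during mixed rectification: a gap (box outside
the current shape), a bullet `•`, or a letter of the doubled alphabet
(`false` = low/underlined, `true` = high/overlined). -/
inductive MEntry where
  | gap : MEntry
  | bullet : MEntry
  | letter : ℕ → Bool → MEntry
deriving DecidableEq

/-- A configuration (tableau with holes and bullets) during mixed
rectification, indexed by (row, column). -/
abbrev MConfig := ℕ × ℕ → MEntry

/-- One mixed slide, rules (2.1)–(2.6) of mixed jeu de taquin. -/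
def MixedSlide (C C' : MConfig) : Prop := ∃ r c,
  -- (2.1) first diagonal slide
  (r + 1 ≤ c ∧ C (r, c) = .bullet ∧ C (r, c + 1) = .bullet ∧ C (r + 1, c) = .bullet ∧
    (∃ v h, C (r + 1, c + 1) = .letter v h ∧
      C' = fun p => if p = (r, c) then .letter v h
        else if p = (r + 1, c + 1) then .bullet else C p)) ∨
  -- (2.1) second diagonal slide (gap below-left)
  (r ≤ c ∧ C (r, c) = .bullet ∧ C (r, c + 1) = .bullet ∧ C (r + 1, c) = .gap ∧
    (∃ v h, C (r + 1, c + 1) = .letter v h ∧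
      C' = fun p => if p = (r, c) then .letter v h
        else if p = (r + 1, c + 1) then .bullet else C p)) ∨
  -- (2.2) first: a low letter moves up (entries distinct)
  (r + 1 ≤ c ∧ (∃ w hw v, C (r, c) = .letter w hw ∧ C (r, c + 1) = .bullet ∧
    C (r + 1, c) = .bullet ∧ C (r + 1, c + 1) = .letter v false ∧
    (w, hw) ≠ (v, false) ∧
    C' = fun p => if p = (r, c + 1) then .letter v false
      else if p = (r + 1, c + 1) then .bullet else C p)) ∨
  -- (2.2) second: a high letter moves left (entries distinct)
  (r + 1 ≤ c ∧ (∃ w hw v, C (r, c) = .letter w hw ∧ C (r, c + 1) = .bullet ∧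
    C (r + 1, c) = .bullet ∧ C (r + 1, c + 1) = .letter v true ∧
    (w, hw) ≠ (v, true) ∧
    C' = fun p => if p = (r + 1, c) then .letter v true
      else if p = (r + 1, c + 1) then .bullet else C p)) ∨
  -- (2.3) first: a low letter moves left and is raised
  (r ≤ c ∧ (∃ w hw x hx v, C (r, c) = .letter w hw ∧ C (r, c + 1) = .letter x hx ∧
    C (r, c + 2) = .bullet ∧ C (r + 1, c) = .gap ∧ C (r + 1, c + 1) = .bullet ∧
    C (r + 1, c + 2) = .letter v false ∧
    C' = fun p => if p = (r + 1, c + 1) then .letter v true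
      else if p = (r + 1, c + 2) then .bullet else C p)) ∨
  -- (2.3) second: a low letter moves left (equal entries case)
  (r + 2 ≤ c ∧ (∃ v, C (r, c) = .letter v false ∧ C (r, c + 1) = .bullet ∧
    C (r + 1, c) = .bullet ∧ C (r + 1, c + 1) = .letter v false ∧
    C' = fun p => if p = (r + 1, c) then .letter v false
      else if p = (r + 1, c + 1) then .bullet else C p)) ∨
  -- (2.3) third: a high letter moves up (equal entries case)
  (r + 1 ≤ c ∧ (∃ v, C (r, c) = .letter v true ∧ C (r, c + 1) = .bullet ∧
    C (r + 1, c) = .bullet ∧ C (r + 1, c + 1) = .letter v true ∧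
    C' = fun p => if p = (r, c + 1) then .letter v true
      else if p = (r + 1, c + 1) then .bullet else C p)) ∨
  -- (2.4): at the diagonal, `• ūy / ōy → ōy ōy / •`
  (∃ v, C (c, c) = .bullet ∧ C (c, c + 1) = .letter v false ∧
    C (c + 1, c + 1) = .letter v true ∧
    C' = fun p => if p = (c, c) then .letter v true
      else if p = (c, c + 1) then .letter v true
      else if p = (c + 1, c + 1) then .bullet else C p) ∨
  -- (2.5) first: a letter slides onto the diagonal and is raised
  (∃ v h, C (c, c) = .bullet ∧ C (c, c + 1) = .letter v h ∧
    C' = fun p => if p = (c, c) then .letter v true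
      else if p = (c, c + 1) then .bullet else C p) ∨
  -- (2.5) second: a high letter leaves the diagonal and is lowered
  (∃ w hw v, C (c, c) = .letter w hw ∧ C (c, c + 1) = .bullet ∧
    C (c + 1, c + 1) = .letter v true ∧
    C' = fun p => if p = (c, c + 1) then .letter v false
      else if p = (c + 1, c + 1) then .bullet else C p) ∨
  -- (2.6) horizontal slide (off the diagonal)
  (r < c ∧ (∃ v h, C (r, c) = .bullet ∧ C (r, c + 1) = .letter v h ∧
    C' = fun p => if p = (r, c) then .letter v h
      else if p = (r, c + 1) then .bullet else C p)) ∨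
  -- (2.6) vertical slide
  (r + 1 ≤ c ∧ (∃ v h, C (r, c) = .bullet ∧ C (r + 1, c) = .letter v h ∧
    C' = fun p => if p = (r, c) then .letter v h
      else if p = (r + 1, c) then .bullet else C p))

/-- A bookkeeping step of mixed rectification that only creates or deletes
bullets/gaps (placing bullets in the bottom row of the inner shape, deleting
bullets with no entry to their southeast); letters are untouched. -/
def BulletStep (C C' : MConfig) : Prop :=
  ∀ p, C p = C' p ∨
    ((C p = .gap ∨ C p = .bullet) ∧ (C' p = .gap ∨ C' p = .bullet))

/-- Invariant of mixed rectification: starting from a configuration with no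
low entry in any diagonal cell, no configuration reachable by mixed slides and
bullet bookkeeping steps ever has a low entry in a diagonal cell. -/
theorem mixedRectification_no_low_on_diagonal (C₀ C : MConfig)
    (h0 : ∀ c v, C₀ (c, c) ≠ MEntry.letter v false)
    (h : Relation.ReflTransGen (fun X Y => MixedSlide X Y ∨ BulletStep X Y) C₀ C) :
    ∀ c v, C (c, c) ≠ MEntry.letter v false := by
  induction h with
  | refl => exact h0
  | tail _ step ih =>
    rcases step with hs | hb
    · obtain ⟨r, c, H⟩ := hs
      intro d v hv
      rcases H with ⟨hrc, h1, h2, h3, w, hw, h4, hC⟩ |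
        ⟨hrc, h1, h2, h3, w, hw, h4, hC⟩ |
        ⟨hrc, w, hw, x, h1, h2, h3, h4, hne, hC⟩ |
        ⟨hrc, w, hw, x, h1, h2, h3, h4, hne, hC⟩ |
        ⟨hrc, w, hw, x, hx, y, h1, h2, h3, h4, h5, h6, hC⟩ |
        ⟨hrc, w, h1, h2, h3, h4, hC⟩ |
        ⟨hrc, w, h1, h2, h3, h4, hC⟩ |
        ⟨w, h1, h2, h3, hC⟩ |
        ⟨w, hw, h1, h2, hC⟩ |
        ⟨w, hw, x, h1, h2, h3, hC⟩ |
        ⟨hrc, w, hw, h1, h2, hC⟩ |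
        ⟨hrc, w, hw, h1, h2, hC⟩ <;>
        subst hC <;>
        simp only [] at hv <;>
        split_ifs at hv <;>
          first
            | exact ih d v hv
            | (simp at hv; done)
            | (rename_i e; rw [Prod.mk.injEq] at e; omega)
            | (rename_i e; rw [Prod.mk.injEq] at e;
               simp only [MEntry.letter.injEq] at hv; obtain ⟨rfl, rfl⟩ := hv;
               obtain ⟨rfl, rfl⟩ := e; exact ih _ w h4)
    · intro d v hv
      rcases hb (d, d) with he | ⟨_, hg | hg⟩
      · exact ih d v (he ▸ hv)
      · rw [hg] at hv; exact MEntry.noConfusion hv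
      · rw [hg] at hv; exact MEntry.noConfusion hv
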